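/- Let j, j' be 2×2 integer matrices with determinant ±1, written j = [[r, p],[s, q]] and j' = [[r', p'],[s', q']]. Then there exist integers m₀, m₁ and signs δ₀, δ₁ ∈ {−1, 1} such that [[1,0],[m₁,δ₁]] · j = j' · [[1,0],[m₀,δ₀]] if and only if |p'| = |p| and r' ≡ r (mod |p|). -/
import Mathlib


/-- For unimodular integer matrices `j = [[r,p],[s,q]]` and `j' = [[r',p'],[s',q']]`,
there exist integers `m₀, m₁` and signs `δ₀, δ₁ ∈ {−1,1}` with
`[[1,0],[m₁,δ₁]]·j = j'·[[1,0],[m₀,δ₀]]` iff `|p'| = |p|` and `r' ≡ r (mod |p|)`. -/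
theorem stmt_1 (r p s q r' p' s' q' : ℤ)
    (hj : (!![r, p; s, q] : Matrix (Fin 2) (Fin 2) ℤ).det = 1 ∨
          (!![r, p; s, q] : Matrix (Fin 2) (Fin 2) ℤ).det = -1)
    (hj' : (!![r', p'; s', q'] : Matrix (Fin 2) (Fin 2) ℤ).det = 1 ∨
           (!![r', p'; s', q'] : Matrix (Fin 2) (Fin 2) ℤ).det = -1) :
    (∃ m₀ m₁ δ₀ δ₁ : ℤ, (δ₀ = 1 ∨ δ₀ = -1) ∧ (δ₁ = 1 ∨ δ₁ = -1) ∧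
      !![(1 : ℤ), 0; m₁, δ₁] * !![r, p; s, q] = !![r', p'; s', q'] * !![(1 : ℤ), 0; m₀, δ₀]) ↔
    (|p'| = |p| ∧ r' ≡ r [ZMOD |p|]) := by
  simp only [Matrix.det_fin_two_of] at hj hj'
  constructor
  · rintro ⟨m₀, m₁, δ₀, δ₁, hδ₀, hδ₁, heq⟩
    rw [show !![(1 : ℤ), 0; m₁, δ₁] * !![r, p; s, q] =
          !![1*r+0*s, 1*p+0*q; m₁*r+δ₁*s, m₁*p+δ₁*q] from by simp [Matrix.mul_fin_two],
        show !![r', p'; s', q'] * !![(1 : ℤ), 0; m₀, δ₀] =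
          !![r'*1+p'*m₀, r'*0+p'*δ₀; s'*1+q'*m₀, s'*0+q'*δ₀] from by
            simp [Matrix.mul_fin_two]] at heq
    rw [← Matrix.ext_iff] at heq
    have h00 : r = r' + p' * m₀ := by have := heq 0 0; simpa using this
    have h01 : p = p' * δ₀ := by have := heq 0 1; simpa using this
    have hδ2 : δ₀ * δ₀ = 1 := by rcases hδ₀ with h | h <;> subst h <;> norm_num
    constructor
    · rcases hδ₀ with h | h <;> subst h <;> simp at h01 <;> simp [h01, abs_neg]
    · refine (Int.modEq_iff_dvd).mpr ((abs_dvd _ _).mpr ⟨δ₀ * m₀, ?_⟩)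
      linear_combination h00 - δ₀ * m₀ * h01 - p' * m₀ * hδ2
  · rintro ⟨habs, hmod⟩
    have hε2 : (r * q - p * s) * (r * q - p * s) = 1 := by
      rcases hj with h | h <;> rw [h] <;> ring
    -- choose δ₀ with p = δ₀ * p'
    obtain ⟨δ₀, hδ₀, hp⟩ : ∃ δ₀ : ℤ, (δ₀ = 1 ∨ δ₀ = -1) ∧ p = δ₀ * p' := by
      rcases abs_eq_abs.mp habs with h | h
      · exact ⟨1, Or.inl rfl, by omega⟩
      · exact ⟨-1, Or.inr rfl, by omega⟩
    -- choose m₀ with r - r' = p' * m₀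
    have hdvd : p' ∣ r - r' := by
      have h1 : |p| ∣ r - r' := (Int.modEq_iff_dvd).mp hmod
      rw [← habs] at h1
      exact (abs_dvd _ _).mp h1
    obtain ⟨m₀, hr⟩ := hdvd
    refine ⟨m₀, (r * q - p * s) * (q * (s' + q' * m₀) - s * q' * δ₀), δ₀,
      (r * q - p * s) * δ₀ * (r' * q' - p' * s'), hδ₀, ?_, ?_⟩
    · rcases hj with h | h <;> rcases hj' with h' | h' <;> rcases hδ₀ with h0 | h0 <;>
        rw [h, h', h0] <;> norm_num
    · rw [show !![(1 : ℤ), 0;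
            (r * q - p * s) * (q * (s' + q' * m₀) - s * q' * δ₀),
            (r * q - p * s) * δ₀ * (r' * q' - p' * s')] * !![r, p; s, q] =
          !![1*r+0*s, 1*p+0*q;
             ((r * q - p * s) * (q * (s' + q' * m₀) - s * q' * δ₀))*r +
               ((r * q - p * s) * δ₀ * (r' * q' - p' * s'))*s,
             ((r * q - p * s) * (q * (s' + q' * m₀) - s * q' * δ₀))*p +
               ((r * q - p * s) * δ₀ * (r' * q' - p' * s'))*q] from by
            simp [Matrix.mul_fin_two],
          show !![r', p'; s', q'] * !![(1 : ℤ), 0; m₀, δ₀] =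
            !![r'*1+p'*m₀, r'*0+p'*δ₀; s'*1+q'*m₀, s'*0+q'*δ₀] from by
            simp [Matrix.mul_fin_two]]
      have e00 : 1*r+0*s = r'*1+p'*m₀ := by linarith [hr]
      have e01 : 1*p+0*q = r'*0+p'*δ₀ := by rw [hp]; ring
      have e10 : ((r * q - p * s) * (q * (s' + q' * m₀) - s * q' * δ₀))*r +
          ((r * q - p * s) * δ₀ * (r' * q' - p' * s'))*s = s'*1+q'*m₀ := by
        linear_combination (s' + q' * m₀) * hε2 +
          ((r * q - p * s) * s' * s + (r * q - p * s) * s * q' * m₀) * hp +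
          (-((r * q - p * s) * s * q' * δ₀)) * hr
      have e11 : ((r * q - p * s) * (q * (s' + q' * m₀) - s * q' * δ₀))*p +
          ((r * q - p * s) * δ₀ * (r' * q' - p' * s'))*q = s'*0+q'*δ₀ := by
        linear_combination (q' * δ₀) * hε2 +
          ((r * q - p * s) * m₀ * q' * q + (r * q - p * s) * s' * q) * hp +
          (-((r * q - p * s) * δ₀ * q' * q)) * hr
      ext i j
      fin_cases i <;> fin_cases j
      · simpa using e00
      · simpa using e01
      · simpa using e10
      · simpa using e11
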